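/- For every positive integer m, the 4-coloring of [8m+5] with prefix C, C, then the block ABCC repeated m times, then the block DDAB repeated m times, then D, B, A, contains no rainbow 4-term arithmetic progression, and each color class has at least ⌊(8m+5)/4⌋ elements. -/

import Mathlib

inductive Color | A | B | C | D
  deriving DecidableEq

open Color

/-- A coloring `c` of `{1,...,n}` contains a rainbow 4-term AP. -/
def RainbowAP4 (n : ℕ) (c : ℕ → Color) : Prop :=
  ∃ t d : ℕ, 1 ≤ t ∧ 1 ≤ d ∧ t + 3*d ≤ n ∧
    c t ≠ c (t+d) ∧ c t ≠ c (t+2*d) ∧ c t ≠ c (t+3*d) ∧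
    c (t+d) ≠ c (t+2*d) ∧ c (t+d) ≠ c (t+3*d) ∧ c (t+2*d) ≠ c (t+3*d)

/-- The coloring for STATEMENT 7. -/
def col (m i : ℕ) : Color :=
  if i ≤ 2 then C else if i ≤ 4*m+2 then (if i % 4 = 3 then A else if i % 4 = 0 then B else C) else if i ≤ 8*m+2 then (if i % 4 = 3 ∨ i % 4 = 0 then D else if i % 4 = 1 then A else B) else if i = 8*m+3 then D else if i = 8*m+4 then B else A

lemma col_first (m i : ℕ) (h1 : 1 ≤ i) (h2 : i ≤ 4*m+2) :
    col m i = (if i % 4 = 3 then A else if i % 4 = 0 then B else C) := by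
  unfold col
  split_ifs <;> first | rfl | omega

lemma col_second (m i : ℕ) (h1 : 4*m+3 ≤ i) (h2 : i ≤ 8*m+5) :
    col m i = (if i = 8*m+4 then B else if i % 4 = 3 ∨ i % 4 = 0 then D else if i % 4 = 1 then A else B) := by
  unfold col
  split_ifs <;> first | rfl | omega

lemma col_spec (m i : ℕ) (h1 : 1 ≤ i) (h2 : i ≤ 8*m+5) :
    (col m i = A ∧ ((i ≤ 4*m+2 ∧ i % 4 = 3) ∨ (4*m+3 ≤ i ∧ i % 4 = 1)))
  ∨ (col m i = B ∧ ((i ≤ 4*m+2 ∧ i % 4 = 0) ∨ (4*m+3 ≤ i ∧ i % 4 = 2) ∨ i = 8*m+4))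
  ∨ (col m i = C ∧ (i ≤ 4*m+2 ∧ (i % 4 = 1 ∨ i % 4 = 2)))
  ∨ (col m i = D ∧ (4*m+3 ≤ i ∧ (i % 4 = 3 ∨ i % 4 = 0) ∧ i ≠ 8*m+4)) := by
  by_cases hf : i ≤ 4*m+2
  · rw [col_first m i h1 hf]
    split_ifs with ha hb
    · exact Or.inl ⟨rfl, Or.inl ⟨hf, ha⟩⟩
    · exact Or.inr (Or.inl ⟨rfl, Or.inl ⟨hf, hb⟩⟩)
    · exact Or.inr (Or.inr (Or.inl ⟨rfl, hf, by omega⟩))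
  · rw [col_second m i (by omega) h2]
    split_ifs with ha hb hc
    · exact Or.inr (Or.inl ⟨rfl, Or.inr (Or.inr ha)⟩)
    · exact Or.inr (Or.inr (Or.inr ⟨rfl, by omega, hb, ha⟩))
    · exact Or.inl ⟨rfl, Or.inr ⟨by omega, hc⟩⟩
    · exact Or.inr (Or.inl ⟨rfl, Or.inr (Or.inl ⟨by omega, by omega⟩)⟩)

lemma no_rainbow (m : ℕ) (hm : 0 < m) : ¬ RainbowAP4 (8*m+5) (col m) := by
  rintro ⟨t, d, ht, hd, hle, h01, h02, h03, h12, h13, h23⟩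
  have s0 := col_spec m t (by omega) (by omega)
  have s1 := col_spec m (t+d) (by omega) (by omega)
  have s2 := col_spec m (t+2*d) (by omega) (by omega)
  have s3 := col_spec m (t+3*d) (by omega) (by omega)
  rcases s0 with ⟨e0,a0⟩|⟨e0,a0⟩|⟨e0,a0⟩|⟨e0,a0⟩ <;>
  rcases s1 with ⟨e1,a1⟩|⟨e1,a1⟩|⟨e1,a1⟩|⟨e1,a1⟩ <;>
  rcases s2 with ⟨e2,a2⟩|⟨e2,a2⟩|⟨e2,a2⟩|⟨e2,a2⟩ <;>
  rcases s3 with ⟨e3,a3⟩|⟨e3,a3⟩|⟨e3,a3⟩|⟨e3,a3⟩ <;>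
    first
    | exact h01 (e0.trans e1.symm)
    | exact h02 (e0.trans e2.symm)
    | exact h03 (e0.trans e3.symm)
    | exact h12 (e1.trans e2.symm)
    | exact h13 (e1.trans e3.symm)
    | exact h23 (e2.trans e3.symm)
    | omega

lemma count_lb (m : ℕ) (x : Color) (f : ℕ → ℕ)
    (hmem : ∀ k < 2*m+1, 1 ≤ f k ∧ f k ≤ 8*m+5 ∧ col m (f k) = x)
    (hinj : ∀ a < 2*m+1, ∀ b < 2*m+1, f a = f b → a = b) :
    (8*m+5)/4 ≤ ((Finset.Icc 1 (8*m+5)).filter (fun i => col m i = x)).card := by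
  have h : (Finset.range (2*m+1)).card ≤ ((Finset.Icc 1 (8*m+5)).filter (fun i => col m i = x)).card := by
    apply Finset.card_le_card_of_injOn f
    · intro k hk
      simp only [Finset.mem_coe, Finset.mem_range] at hk
      obtain ⟨h1, h2, h3⟩ := hmem k hk
      simp only [Finset.mem_coe, Finset.mem_filter, Finset.mem_Icc]
      exact ⟨⟨h1, h2⟩, h3⟩
    · intro a ha b hb h
      simp only [Finset.coe_range, Set.mem_Iio] at ha hb
      exact hinj a ha b hb h
  rw [Finset.card_range] at h
  omega

lemma count_A (m : ℕ) (hm : 0 < m) :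
    (8*m+5)/4 ≤ ((Finset.Icc 1 (8*m+5)).filter (fun i => col m i = A)).card := by
  apply count_lb m A (fun k => 4*k+3 + (if m ≤ k then 2 else 0))
  · intro k hk
    refine ⟨by split_ifs <;> omega, by split_ifs <;> omega, ?_⟩
    by_cases h : m ≤ k
    · rw [if_pos h, col_second m _ (by omega) (by omega)]
      split_ifs <;> first | rfl | omega
    · rw [if_neg h, col_first m _ (by omega) (by omega)]
      split_ifs <;> first | rfl | omega
  · intro a _ b _ h
    split_ifs at h <;> omega

lemma count_B (m : ℕ) (hm : 0 < m) :
    (8*m+5)/4 ≤ ((Finset.Icc 1 (8*m+5)).filter (fun i => col m i = B)).card := by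
  apply count_lb m B (fun k => if k = 2*m then 8*m+4 else 4*k+4 + (if m ≤ k then 2 else 0))
  · intro k hk
    refine ⟨by split_ifs <;> omega, by split_ifs <;> omega, ?_⟩
    by_cases h0 : k = 2*m
    · rw [if_pos h0, col_second m _ (by omega) (by omega)]
      split_ifs <;> first | rfl | omega
    · rw [if_neg h0]
      by_cases h : m ≤ k
      · rw [if_pos h, col_second m _ (by omega) (by omega)]
        split_ifs <;> first | rfl | omega
      · rw [if_neg h, col_first m _ (by omega) (by omega)]
        split_ifs <;> first | rfl | omega
  · intro a ha b hb h
    split_ifs at h <;> omega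

lemma count_C (m : ℕ) (hm : 0 < m) :
    (8*m+5)/4 ≤ ((Finset.Icc 1 (8*m+5)).filter (fun i => col m i = C)).card := by
  apply count_lb m C (fun k => 2*k+1 - k % 2)
  · intro k hk
    refine ⟨by omega, by omega, ?_⟩
    rw [col_first m _ (by omega) (by omega)]
    split_ifs <;> first | rfl | omega
  · intro a _ b _ h
    omega

lemma count_D (m : ℕ) (hm : 0 < m) :
    (8*m+5)/4 ≤ ((Finset.Icc 1 (8*m+5)).filter (fun i => col m i = D)).card := by
  apply count_lb m D (fun k => 4*m+3+2*k - k % 2)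
  · intro k hk
    refine ⟨by omega, by omega, ?_⟩
    rw [col_second m _ (by omega) (by omega)]
    split_ifs <;> first | rfl | omega
  · intro a _ b _ h
    omega

theorem stmt_7 (m : ℕ) (hm : 0 < m) :
    ¬ RainbowAP4 (8*m+5) (col m) ∧ ∀ x : Color, (8*m+5)/4 ≤ ((Finset.Icc 1 (8*m+5)).filter (fun i => col m i = x)).card := by
  refine ⟨no_rainbow m hm, fun x => ?_⟩
  cases x
  · exact count_A m hm
  · exact count_B m hm
  · exact count_C m hm
  · exact count_D m hm
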